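/- Let n ≥ 1 be an integer and let λ₁, …, λₙ be compactly supported Borel probability measures on ℝ. Then the n-fold product measure λ' = λ₁ × … × λₙ on ℝ^n satisfies dim_{l^1} λ' ≥ dim_{l^1} λ₁ + … + dim_{l^1} λₙ. -/

import Mathlib

open MeasureTheory Metric Set
open scoped ENNReal NNReal

noncomputable section

/-- The Fourier transform of a measure on `ℝⁿ`. -/
def mFT {n : ℕ} (μ : Measure (EuclideanSpace ℝ (Fin n))) (ξ : EuclideanSpace ℝ (Fin n)) : ℂ :=
  ∫ x, Complex.exp (((-2 * Real.pi * (inner ℝ x ξ : ℝ) : ℝ) : ℂ) * Complex.I) ∂μ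

/-- An integer lattice point of `ℤⁿ`, regarded as a point of `ℝⁿ`. -/
def lat {n : ℕ} (k : Fin n → ℤ) : EuclideanSpace ℝ (Fin n) := WithLp.toLp 2 (fun i => (k i : ℝ))

/-- The Fourier `l^p` dimension of a measure on `ℝⁿ`. -/
def dimlp {n : ℕ} (p : ℝ) (μ : Measure (EuclideanSpace ℝ (Fin n))) : ℝ :=
  sSup {s : ℝ | 0 < s ∧ ∃ C : ℝ, 0 < C ∧ ∀ R : ℝ, 1 ≤ R →
    ∀ θ : EuclideanSpace ℝ (Fin n), (∀ i, θ i ∈ Set.Icc (0 : ℝ) 1) →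
      (∑' k : Fin n → ℤ, if ‖lat k‖ ≤ R then ‖mFT μ (lat k + θ)‖ ^ p else 0)
        ≤ C * R ^ ((n : ℝ) - s)}

/-- The (topological) support of a measure. -/
def msupp {X : Type*} [TopologicalSpace X] [MeasurableSpace X] (μ : Measure X) : Set X :=
  {x | ∀ U : Set X, IsOpen U → x ∈ U → 0 < μ U}

/-- The lower Hausdorff dimension of a measure. -/
def muDimH {X : Type*} [EMetricSpace X] [MeasurableSpace X] (μ : Measure X) : ℝ≥0∞ :=
  ⨅ (A : Set X) (_ : MeasurableSet A) (_ : 0 < μ A), dimH A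

/-- The surface measure on the unit sphere `S^{n-1}`, as the `(n-1)`-dimensional
Hausdorff measure restricted to the sphere. -/
def sphMeasure (n : ℕ) : Measure (EuclideanSpace ℝ (Fin n)) :=
  (μH[((n : ℝ) - 1)]).restrict (sphere (0 : EuclideanSpace ℝ (Fin n)) 1)

/-- The radial projection centred at `x`. -/
def radProj {n : ℕ} (x y : EuclideanSpace ℝ (Fin n)) : EuclideanSpace ℝ (Fin n) :=
  ‖y - x‖⁻¹ • (y - x)

/-- Identify `ℝ × ℝ` with the Euclidean plane. -/
def toE2 (q : ℝ × ℝ) : EuclideanSpace ℝ (Fin 2) := WithLp.toLp 2 ![q.1, q.2]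

/-- The Fourier transform of a measure on `ℝ`. -/
def mFTR (μ : Measure ℝ) (ξ : ℝ) : ℂ :=
  ∫ x, Complex.exp (((-2 * Real.pi * (x * ξ) : ℝ) : ℂ) * Complex.I) ∂μ

/-- The Fourier `l^p` dimension of a measure on `ℝ`. -/
def dimlpR (p : ℝ) (μ : Measure ℝ) : ℝ :=
  sSup {s : ℝ | 0 < s ∧ ∃ C : ℝ, 0 < C ∧ ∀ R : ℝ, 1 ≤ R → ∀ θ ∈ Set.Icc (0 : ℝ) 1,
    (∑' k : ℤ, if |(k : ℝ)| ≤ R then ‖mFTR μ ((k : ℝ) + θ)‖ ^ p else 0) ≤ C * R ^ (1 - s)}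

set_option maxHeartbeats 1000000 in
theorem integral_pi_prod : ∀ {m : ℕ} (ν : Fin m → Measure ℝ) [∀ i, SigmaFinite (ν i)]
    (f : Fin m → ℝ → ℂ),
    ∫ x : Fin m → ℝ, ∏ i, f i (x i) ∂Measure.pi ν = ∏ i, ∫ x, f i x ∂ν i := by
  intro m
  induction m with
  | zero => intro ν _ f; simp [Measure.pi_empty_univ, Measure.real]
  | succ m ih =>
    intro ν _ f
    calc ∫ x : Fin (m+1) → ℝ, ∏ i, f i (x i) ∂Measure.pi ν
        = ∫ p : ℝ × (Fin m → ℝ), f 0 p.1 * ∏ i : Fin m, f i.succ (p.2 i)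
            ∂((ν 0).prod (Measure.pi fun i => ν i.succ)) := by
          rw [← ((MeasureTheory.measurePreserving_piFinSuccAbove ν 0).symm).integral_comp']
          simp [MeasurableEquiv.piFinSuccAbove_symm_apply, Fin.insertNthEquiv,
            Fin.prod_univ_succ, Fin.insertNth_zero, Fin.zero_succAbove, Fin.cons_zero,
            Fin.cons_succ]
      _ = (∫ x, f 0 x ∂ν 0) *
            ∫ y : Fin m → ℝ, ∏ i : Fin m, f i.succ (y i) ∂Measure.pi (fun i => ν i.succ) :=
          MeasureTheory.integral_prod_mul (f 0) (fun y : Fin m → ℝ => ∏ i : Fin m, f i.succ (y i))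
      _ = (∫ x, f 0 x ∂ν 0) * ∏ i : Fin m, ∫ x, f i.succ x ∂ν i.succ := by rw [ih]
      _ = ∏ i, ∫ x, f i x ∂ν i := (Fin.prod_univ_succ (fun i => ∫ x, f i x ∂ν i)).symm

theorem mFT_pi {n : ℕ} (μs : Fin n → Measure ℝ) [∀ i, IsProbabilityMeasure (μs i)]
    (ξ : EuclideanSpace ℝ (Fin n)) :
    mFT (Measure.map (fun x : Fin n → ℝ => (WithLp.toLp 2 x : EuclideanSpace ℝ (Fin n))) (Measure.pi μs)) ξ
      = ∏ i, mFTR (μs i) (ξ i) := by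
  have hcont : Continuous fun x : EuclideanSpace ℝ (Fin n) =>
      Complex.exp (((-2 * Real.pi * (inner ℝ x ξ : ℝ) : ℝ) : ℂ) * Complex.I) := by
    refine Complex.continuous_exp.comp ?_
    exact (Complex.continuous_ofReal.comp
      (continuous_const.mul (continuous_id.inner continuous_const))).mul continuous_const
  rw [mFT, integral_map (by exact (WithLp.measurable_toLp 2 _).aemeasurable) hcont.aestronglyMeasurable]
  trans (∫ x : Fin n → ℝ,
      ∏ i, Complex.exp (((-2 * Real.pi * (x i * ξ i) : ℝ) : ℂ) * Complex.I) ∂Measure.pi μs)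
  · refine integral_congr_ae (Filter.Eventually.of_forall fun x => ?_)
    dsimp only
    rw [← Complex.exp_sum]
    congr 1
    simp only [PiLp.inner_apply, RCLike.inner_apply, conj_trivial]
    push_cast
    rw [Finset.mul_sum, Finset.sum_mul]
    simp only [mul_comm (((ξ _ : ℝ)) : ℂ)]
  · exact integral_pi_prod μs
      (fun i t => Complex.exp (((-2 * Real.pi * (t * ξ i) : ℝ) : ℂ) * Complex.I))

theorem mFTR_zero (μ : Measure ℝ) [IsProbabilityMeasure μ] : mFTR μ 0 = 1 := by
  simp [mFTR]

theorem mFTR_norm_le (μ : Measure ℝ) [IsProbabilityMeasure μ] (ξ : ℝ) : ‖mFTR μ ξ‖ ≤ 1 := by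
  have := norm_integral_le_of_norm_le_const
    (C := 1) (μ := μ)
    (f := fun x : ℝ => Complex.exp (((-2 * Real.pi * (x * ξ) : ℝ) : ℂ) * Complex.I))
    (Filter.Eventually.of_forall fun x => le_of_eq (Complex.norm_exp_ofReal_mul_I _))
  simpa [mFTR] using this

theorem coord_le_norm {n : ℕ} (x : EuclideanSpace ℝ (Fin n)) (i : Fin n) : |x i| ≤ ‖x‖ := by
  rw [EuclideanSpace.norm_eq, ← Real.sqrt_sq_eq_abs]
  apply Real.sqrt_le_sqrt
  have := Finset.single_le_sum (f := fun j => ‖x j‖ ^ 2)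
    (fun j _ => sq_nonneg _) (Finset.mem_univ i)
  simpa [Real.norm_eq_abs, sq_abs] using this

theorem mem_T {R : ℝ} {m : ℤ} (h : |(m : ℝ)| ≤ R) : m ∈ Finset.Icc (-⌈R⌉) ⌈R⌉ := by
  rw [abs_le] at h
  rw [Finset.mem_Icc]
  constructor
  · have h' : (-⌈R⌉ : ℝ) ≤ (m : ℝ) := by
      have := Int.le_ceil R
      linarith [h.1]
    exact_mod_cast h'
  · have h' : (m : ℝ) ≤ (⌈R⌉ : ℝ) := le_trans h.2 (Int.le_ceil R)
    exact_mod_cast h'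

theorem card_T_le {R : ℝ} (hR : 1 ≤ R) : ((Finset.Icc (-⌈R⌉) ⌈R⌉).card : ℝ) ≤ 5 * R := by
  have hN : (1 : ℤ) ≤ ⌈R⌉ := by exact_mod_cast Int.le_ceil_iff.mpr (by norm_num; linarith)
  rw [Int.card_Icc]
  have h1 : (⌈R⌉ + 1 - -⌈R⌉) = 2 * ⌈R⌉ + 1 := by ring
  rw [h1]
  have h3 : (⌈R⌉ : ℝ) < R + 1 := Int.ceil_lt_add_one R
  have h4 : ((2 * ⌈R⌉ + 1).toNat : ℝ) = 2 * (⌈R⌉ : ℝ) + 1 := by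
    have h5 : ((2 * ⌈R⌉ + 1).toNat : ℤ) = 2 * ⌈R⌉ + 1 := Int.toNat_of_nonneg (by linarith)
    exact_mod_cast congrArg (fun z : ℤ => (z : ℝ)) h5
  rw [h4]
  linarith

/-- The trivial bound, valid for every probability measure, corresponding to `s = 0`. -/
theorem base_bound (μ : Measure ℝ) [IsProbabilityMeasure μ] {R : ℝ} (hR : 1 ≤ R) (θ : ℝ) :
    (∑' k : ℤ, if |(k : ℝ)| ≤ R then ‖mFTR μ ((k : ℝ) + θ)‖ ^ (1 : ℝ) else 0)
      ≤ 5 * R ^ (1 - (0 : ℝ)) := by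
  have h0 : ∀ m : ℤ, m ∉ Finset.Icc (-⌈R⌉) ⌈R⌉ →
      (if |(m : ℝ)| ≤ R then ‖mFTR μ ((m : ℝ) + θ)‖ ^ (1 : ℝ) else 0) = 0 := by
    intro m hm
    rw [if_neg]
    intro h
    exact hm (mem_T h)
  rw [tsum_eq_sum h0]
  calc (∑ m ∈ Finset.Icc (-⌈R⌉) ⌈R⌉,
        if |(m : ℝ)| ≤ R then ‖mFTR μ ((m : ℝ) + θ)‖ ^ (1 : ℝ) else 0)
      ≤ ∑ m ∈ Finset.Icc (-⌈R⌉) ⌈R⌉, 1 := by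
        refine Finset.sum_le_sum fun m _ => ?_
        split
        · rw [Real.rpow_one]; exact mFTR_norm_le μ _
        · norm_num
    _ = ((Finset.Icc (-⌈R⌉) ⌈R⌉).card : ℝ) := by simp
    _ ≤ 5 * R := card_T_le hR
    _ = 5 * R ^ (1 - (0 : ℝ)) := by rw [sub_zero, Real.rpow_one]


/-- Every element of the `dimlp` set of the product measure is at most `n`. -/
theorem prod_set_le {n : ℕ} (μs : Fin n → Measure ℝ) [∀ i, IsProbabilityMeasure (μs i)]
    {s' : ℝ} (hs' : s' ∈ {s : ℝ | 0 < s ∧ ∃ C : ℝ, 0 < C ∧ ∀ R : ℝ, 1 ≤ R →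
      ∀ θ : EuclideanSpace ℝ (Fin n), (∀ i, θ i ∈ Set.Icc (0 : ℝ) 1) →
        (∑' k : Fin n → ℤ, if ‖lat k‖ ≤ R then
            ‖mFT (Measure.map (fun x : Fin n → ℝ => (WithLp.toLp 2 x : EuclideanSpace ℝ (Fin n)))
              (Measure.pi μs)) (lat k + θ)‖ ^ (1 : ℝ) else 0)
          ≤ C * R ^ ((n : ℝ) - s)}) : s' ≤ (n : ℝ) := by
  obtain ⟨hpos, C, hC, hb⟩ := hs'
  by_contra hlt
  push_neg at hlt
  have key : ∀ R : ℝ, 1 ≤ R → 1 ≤ C * R ^ ((n : ℝ) - s') := by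
    intro R hR
    have hθ : ∀ i, (0 : EuclideanSpace ℝ (Fin n)) i ∈ Set.Icc (0 : ℝ) 1 := by
      intro i; constructor <;> norm_num
    have hb' := hb R hR 0 hθ
    refine le_trans ?_ hb'
    set f : (Fin n → ℤ) → ℝ := fun k => if ‖lat k‖ ≤ R then
      ‖mFT (Measure.map (fun x : Fin n → ℝ => (WithLp.toLp 2 x : EuclideanSpace ℝ (Fin n)))
        (Measure.pi μs)) (lat k + 0)‖ ^ (1 : ℝ) else 0 with hf
    have hsupp : ∀ k, k ∉ Fintype.piFinset (fun _ : Fin n => Finset.Icc (-⌈R⌉) ⌈R⌉) →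
        f k = 0 := by
      intro k hk
      refine if_neg fun h => hk ?_
      rw [Fintype.mem_piFinset]
      exact fun i => mem_T (le_trans (coord_le_norm (lat k) i) h)
    have hsum : Summable f := summable_of_ne_finset_zero hsupp
    have hlat0 : lat (0 : Fin n → ℤ) = (0 : EuclideanSpace ℝ (Fin n)) := by
      ext i; simp [lat]
    have h0 : f 0 = 1 := by
      rw [hf]
      simp only [hlat0, norm_zero, zero_add]
      rw [if_pos (by linarith : (0:ℝ) ≤ R), mFT_pi]
      have : ∀ i : Fin n, mFTR (μs i) ((0 : EuclideanSpace ℝ (Fin n)) i) = 1 := by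
        intro i
        have : (0 : EuclideanSpace ℝ (Fin n)) i = 0 := rfl
        rw [this, mFTR_zero]
      rw [Finset.prod_congr rfl fun i _ => this i]
      simp
    calc (1 : ℝ) = f 0 := h0.symm
      _ ≤ ∑' k, f k := Summable.le_tsum hsum 0 fun j _ => by
          rw [hf]; dsimp only; split
          · positivity
          · exact le_refl 0
  have hts := (tendsto_rpow_neg_atTop (show (0:ℝ) < s' - n by linarith)).const_mul C
  rw [mul_zero] at hts
  have hev := hts.eventually_lt_const one_pos
  obtain ⟨R, hRlt, hR1⟩ := (hev.and (Filter.eventually_ge_atTop 1)).exists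
  have hk := key R hR1
  rw [show ((n : ℝ) - s') = -(s' - (n : ℝ)) by ring] at hk
  linarith

set_option maxHeartbeats 4000000 in
/-- For compactly supported Borel probability measures `λ₁, …, λₙ` on `ℝ`,
the product measure `λ' = λ₁ × … × λₙ` on `ℝⁿ` satisfies
`dim_{l¹} λ' ≥ dim_{l¹} λ₁ + … + dim_{l¹} λₙ`. -/
theorem stmt12 {n : ℕ} (hn : 1 ≤ n) (μs : Fin n → Measure ℝ)
    (hprob : ∀ i, IsProbabilityMeasure (μs i))
    (hcomp : ∀ i, ∃ K, IsCompact K ∧ μs i Kᶜ = 0) :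
    ∑ i, dimlpR 1 (μs i) ≤
      dimlp 1 (Measure.map (fun x : Fin n → ℝ => (WithLp.toLp 2 x : EuclideanSpace ℝ (Fin n)))
        (Measure.pi μs)) := by
  haveI := hprob
  have hnpos : (0 : ℝ) < n := by exact_mod_cast hn
  refine le_of_forall_pos_le_add fun ε hε => ?_
  have hεn : 0 < ε / n := div_pos hε hnpos
  have hchoice : ∀ i : Fin n, ∃ s C : ℝ, 0 ≤ s ∧ 0 < C ∧ dimlpR 1 (μs i) ≤ s + ε / n ∧
      ∀ R : ℝ, 1 ≤ R → ∀ θ ∈ Set.Icc (0 : ℝ) 1,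
        (∑' k : ℤ, if |(k : ℝ)| ≤ R then ‖mFTR (μs i) ((k : ℝ) + θ)‖ ^ (1 : ℝ) else 0)
          ≤ C * R ^ (1 - s) := by
    intro i
    by_cases hne : {s : ℝ | 0 < s ∧ ∃ C : ℝ, 0 < C ∧ ∀ R : ℝ, 1 ≤ R →
        ∀ θ ∈ Set.Icc (0 : ℝ) 1,
        (∑' k : ℤ, if |(k : ℝ)| ≤ R then ‖mFTR (μs i) ((k : ℝ) + θ)‖ ^ (1 : ℝ) else 0)
          ≤ C * R ^ (1 - s)}.Nonempty
    · obtain ⟨s, hsmem, hslt⟩ := exists_lt_of_lt_csSup hne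
        (show sSup _ - ε / n < sSup _ by linarith)
      obtain ⟨hs, C, hC, hb⟩ := hsmem
      refine ⟨s, C, le_of_lt hs, hC, ?_, hb⟩
      unfold dimlpR
      linarith
    · rw [Set.not_nonempty_iff_eq_empty] at hne
      refine ⟨0, 5, le_refl 0, by norm_num, ?_, fun R hR θ hθ => base_bound (μs i) hR θ⟩
      unfold dimlpR
      rw [hne, Real.sSup_empty]
      positivity
  choose s C hs0 hC hdim hbound using hchoice
  have hσ0 : 0 ≤ ∑ i, s i := Finset.sum_nonneg fun i _ => hs0 i
  have hsum : ∑ i, dimlpR 1 (μs i) ≤ (∑ i, s i) + ε := by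
    calc ∑ i, dimlpR 1 (μs i) ≤ ∑ i, (s i + ε / n) := Finset.sum_le_sum fun i _ => hdim i
      _ = (∑ i, s i) + (n : ℝ) * (ε / n) := by
          rw [Finset.sum_add_distrib, Finset.sum_const, Finset.card_univ, Fintype.card_fin,
            nsmul_eq_mul]
      _ = (∑ i, s i) + ε := by
          rw [mul_div_cancel₀ ε (ne_of_gt hnpos)]
  have hmain : (∑ i, s i) ≤ dimlp 1 (Measure.map
      (fun x : Fin n → ℝ => (WithLp.toLp 2 x : EuclideanSpace ℝ (Fin n))) (Measure.pi μs)) := by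
    rcases eq_or_lt_of_le hσ0 with h0 | hpos
    · rw [← h0]
      unfold dimlp
      exact Real.sSup_nonneg fun x hx => le_of_lt hx.1
    · unfold dimlp
      refine le_csSup ⟨(n : ℝ), fun x hx => prod_set_le μs hx⟩ ?_
      refine ⟨hpos, ∏ i, C i, Finset.prod_pos fun i _ => hC i, fun R hR θ hθ => ?_⟩
      have hRpos : (0 : ℝ) < R := lt_of_lt_of_le one_pos hR
      have hcoord : ∀ (k : Fin n → ℤ) (i : Fin n), ‖lat k‖ ≤ R → |(k i : ℝ)| ≤ R :=
        fun k i h => le_trans (coord_le_norm (lat k) i) h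
      have hg0 : ∀ i : Fin n, ∀ m : ℤ, m ∉ Finset.Icc (-⌈R⌉) ⌈R⌉ →
          (if |(m : ℝ)| ≤ R then ‖mFTR (μs i) ((m : ℝ) + θ i)‖ ^ (1 : ℝ) else 0) = 0 :=
        fun i m hm => if_neg fun h => hm (mem_T h)
      have hf0 : ∀ k : Fin n → ℤ,
          k ∉ Fintype.piFinset (fun _ : Fin n => Finset.Icc (-⌈R⌉) ⌈R⌉) →
          (if ‖lat k‖ ≤ R then ‖mFT (Measure.map
              (fun x : Fin n → ℝ => (WithLp.toLp 2 x : EuclideanSpace ℝ (Fin n))) (Measure.pi μs))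
              (lat k + θ)‖ ^ (1 : ℝ) else 0) = 0 := by
        intro k hk
        refine if_neg fun h => hk ?_
        rw [Fintype.mem_piFinset]
        exact fun i => mem_T (hcoord k i h)
      calc (∑' k : Fin n → ℤ, if ‖lat k‖ ≤ R then ‖mFT (Measure.map
              (fun x : Fin n → ℝ => (WithLp.toLp 2 x : EuclideanSpace ℝ (Fin n))) (Measure.pi μs))
              (lat k + θ)‖ ^ (1 : ℝ) else 0)
          = ∑ k ∈ Fintype.piFinset (fun _ : Fin n => Finset.Icc (-⌈R⌉) ⌈R⌉),
              (if ‖lat k‖ ≤ R then ‖mFT (Measure.map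
                (fun x : Fin n → ℝ => (WithLp.toLp 2 x : EuclideanSpace ℝ (Fin n))) (Measure.pi μs))
                (lat k + θ)‖ ^ (1 : ℝ) else 0) := tsum_eq_sum hf0
        _ ≤ ∑ k ∈ Fintype.piFinset (fun _ : Fin n => Finset.Icc (-⌈R⌉) ⌈R⌉),
              ∏ i, (if |(k i : ℝ)| ≤ R then ‖mFTR (μs i) ((k i : ℝ) + θ i)‖ ^ (1 : ℝ) else 0) := by
            refine Finset.sum_le_sum fun k _ => ?_
            by_cases h : ‖lat k‖ ≤ R
            · rw [if_pos h, Real.rpow_one, mFT_pi μs (lat k + θ), norm_prod]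
              refine Finset.prod_le_prod (fun i _ => norm_nonneg _) fun i _ => ?_
              rw [if_pos (hcoord k i h), Real.rpow_one]
              have happ : (lat k + θ) i = (k i : ℝ) + θ i := rfl
              rw [happ]
            · rw [if_neg h]
              refine Finset.prod_nonneg fun i _ => ?_
              split
              · positivity
              · exact le_refl 0
        _ = ∏ i, ∑ m ∈ Finset.Icc (-⌈R⌉) ⌈R⌉,
              (if |(m : ℝ)| ≤ R then ‖mFTR (μs i) ((m : ℝ) + θ i)‖ ^ (1 : ℝ) else 0) :=
            (Finset.prod_univ_sum (fun _ : Fin n => Finset.Icc (-⌈R⌉) ⌈R⌉)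
              (fun i m => if |(m : ℝ)| ≤ R then ‖mFTR (μs i) ((m : ℝ) + θ i)‖ ^ (1 : ℝ)
                else 0)).symm
        _ = ∏ i, ∑' m : ℤ,
              (if |(m : ℝ)| ≤ R then ‖mFTR (μs i) ((m : ℝ) + θ i)‖ ^ (1 : ℝ) else 0) :=
            Finset.prod_congr rfl fun i _ => (tsum_eq_sum (hg0 i)).symm
        _ ≤ ∏ i, C i * R ^ (1 - s i) :=
            Finset.prod_le_prod
              (fun i _ => tsum_nonneg fun m => by
                split
                · positivity
                · exact le_refl 0)
              (fun i _ => hbound i R hR (θ i) (hθ i))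
        _ = (∏ i, C i) * R ^ ((n : ℝ) - ∑ i, s i) := by
            rw [Finset.prod_mul_distrib, ← Real.rpow_sum_of_pos hRpos]
            congr 1
            rw [Finset.sum_sub_distrib, Finset.sum_const, Finset.card_univ, Fintype.card_fin,
              nsmul_eq_mul, mul_one]
  linarith
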